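/- Let n ≥ 1 and let A and B be n×n complex Hermitian matrices. Then for every integer k with 1 ≤ k ≤ n, the sum of the k smallest eigenvalues satisfies ∑_{j=1}^{k} λ_j(A+B) ≥ ∑_{j=1}^{k} (λ_j(A) + λ_j(B)). -/

import Mathlib

/-- The eigenvalues of a Hermitian matrix, listed with multiplicity in
nondecreasing order: `sortedEigenvalues hA 0 ≤ ⋯ ≤ sortedEigenvalues hA (n-1)`. -/
noncomputable def sortedEigenvalues {n : ℕ} {A : Matrix (Fin n) (Fin n) ℂ}
    (hA : A.IsHermitian) : Fin n → ℝ :=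
  hA.eigenvalues ∘ Tuple.sort hA.eigenvalues


lemma kyfan_rearrange {n k : ℕ} (hk1 : 1 ≤ k) (hk2 : k ≤ n) (μ c : Fin n → ℝ)
    (hmono : Monotone μ) (hc0 : ∀ α, 0 ≤ c α) (hc1 : ∀ α, c α ≤ 1)
    (hsum : ∑ α, c α = k) :
    ∑ α ∈ Finset.univ.filter (fun α : Fin n => (α : ℕ) < k), μ α ≤ ∑ α, μ α * c α := by
  have hkn : k - 1 < n := lt_of_lt_of_le (Nat.sub_lt hk1 one_pos) hk2
  set p : Fin n := ⟨k - 1, hkn⟩ with hp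
  set t : ℝ := μ p with ht
  set χ : Fin n → ℝ := fun α => if (α : ℕ) < k then 1 else 0 with hχ
  have hχsum : ∑ α, χ α = k := by
    rw [hχ]
    rw [Fin.sum_univ_eq_sum_range (fun i => if i < k then (1:ℝ) else 0)]
    rw [← Finset.sum_range_add_sum_Ico _ hk2]
    rw [Finset.sum_congr rfl (fun i hi => if_pos (Finset.mem_range.mp hi)),
      Finset.sum_congr rfl (fun i hi => if_neg (by have := (Finset.mem_Ico.mp hi).1; omega))]
    simp
  have key : ∀ α, 0 ≤ (μ α - t) * (c α - χ α) := by
    intro α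
    by_cases h : (α : ℕ) < k
    · have h1 : μ α ≤ t := hmono (by simp [hp, Fin.le_def]; omega)
      have : χ α = 1 := if_pos h
      nlinarith [hc1 α]
    · have h1 : t ≤ μ α := hmono (by simp [hp, Fin.le_def]; omega)
      have : χ α = 0 := if_neg h
      nlinarith [hc0 α]
  have h2 : 0 ≤ ∑ α, (μ α - t) * (c α - χ α) := Finset.sum_nonneg fun α _ => key α
  have h3 : ∑ α, (μ α - t) * (c α - χ α)
      = ∑ α, μ α * c α - ∑ α, μ α * χ α - t * (∑ α, c α - ∑ α, χ α) := by
    rw [mul_sub, Finset.mul_sum, Finset.mul_sum, ← Finset.sum_sub_distrib,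
      ← Finset.sum_sub_distrib, ← Finset.sum_sub_distrib]
    exact Finset.sum_congr rfl fun α _ => by ring
  have h4 : ∑ α, μ α * χ α = ∑ α ∈ Finset.univ.filter (fun α : Fin n => (α : ℕ) < k), μ α := by
    simp only [hχ, mul_ite, mul_one, mul_zero]
    exact (Finset.sum_filter _ _).symm
  rw [hsum, hχsum, sub_self, mul_zero, sub_zero, h4] at h3
  linarith

open Matrix in
lemma kyfan_lower {n k : ℕ} (hk1 : 1 ≤ k) (hk2 : k ≤ n)
    {M : Matrix (Fin n) (Fin n) ℂ} (hM : M.IsHermitian)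
    (V : Matrix (Fin n) (Fin k) ℂ) (hV : Vᴴ * V = 1) :
    ∑ j ∈ Finset.univ.filter (fun j : Fin n => (j : ℕ) < k), sortedEigenvalues hM j
      ≤ (Matrix.trace (Vᴴ * M * V)).re := by
  set U : Matrix (Fin n) (Fin n) ℂ := (hM.eigenvectorUnitary : Matrix (Fin n) (Fin n) ℂ) with hUdef
  have hU1 : Uᴴ * U = 1 := by
    rw [← Matrix.star_eq_conjTranspose]
    exact (Matrix.mem_unitaryGroup_iff').mp (hM.eigenvectorUnitary).2
  have hU2 : U * Uᴴ = 1 := by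
    rw [← Matrix.star_eq_conjTranspose]
    exact (Matrix.mem_unitaryGroup_iff).mp (hM.eigenvectorUnitary).2
  set D : Matrix (Fin n) (Fin n) ℂ := Matrix.diagonal (fun i => (hM.eigenvalues i : ℂ)) with hDdef
  have hMspec : M = U * D * Uᴴ := by
    rw [← Matrix.star_eq_conjTranspose]
    convert hM.spectral_theorem using 3
    rfl
  set W : Matrix (Fin n) (Fin k) ℂ := Uᴴ * V with hWdef
  have hW : Wᴴ * W = 1 := by
    rw [hWdef, Matrix.conjTranspose_mul, Matrix.conjTranspose_conjTranspose,
      Matrix.mul_assoc, ← Matrix.mul_assoc U, hU2, Matrix.one_mul, hV]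
  have hVMV : Vᴴ * M * V = Wᴴ * D * W := by
    rw [hWdef, Matrix.conjTranspose_mul, Matrix.conjTranspose_conjTranspose, hMspec]
    simp only [Matrix.mul_assoc]
  set c : Fin n → ℝ := fun α => ∑ j, Complex.normSq (W α j) with hcdef
  have hc0 : ∀ α, 0 ≤ c α := fun α =>
    Finset.sum_nonneg fun j _ => Complex.normSq_nonneg _
  -- diagonal entries computation
  have hent : ∀ j : Fin k, ((Wᴴ * D * W) j j).re
      = ∑ α, hM.eigenvalues α * Complex.normSq (W α j) := by
    intro j
    rw [Matrix.mul_assoc, Matrix.mul_apply, Complex.re_sum]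
    apply Finset.sum_congr rfl
    intro α _
    rw [Matrix.conjTranspose_apply, hDdef, Matrix.diagonal_mul]
    rw [Complex.star_def, show (starRingEnd ℂ) (W α j) * ((hM.eigenvalues α : ℂ) * W α j)
        = (hM.eigenvalues α : ℂ) * ((W α j) * (starRingEnd ℂ) (W α j)) by ring,
      Complex.mul_conj, ← Complex.ofReal_mul, Complex.ofReal_re]
  have htr : (Matrix.trace (Vᴴ * M * V)).re = ∑ α, hM.eigenvalues α * c α := by
    rw [hVMV, Matrix.trace, Complex.re_sum]
    simp only [Matrix.diag_apply]
    rw [Finset.sum_congr rfl fun j _ => hent j, Finset.sum_comm]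
    apply Finset.sum_congr rfl
    intro α _
    rw [hcdef, Finset.mul_sum]
  -- sum of c equals k
  have hcol : ∀ j : Fin k, ∑ α, Complex.normSq (W α j) = 1 := by
    intro j
    have h1 : ((Wᴴ * W) j j) = 1 := by rw [hW]; simp [Matrix.one_apply]
    have h2 : ((Wᴴ * W) j j).re = ∑ α, Complex.normSq (W α j) := by
      rw [Matrix.mul_apply, Complex.re_sum]
      apply Finset.sum_congr rfl
      intro α _
      rw [Matrix.conjTranspose_apply, Complex.star_def, show ((starRingEnd ℂ) (W α j)) * W α j
        = (W α j) * (starRingEnd ℂ) (W α j) by ring, Complex.mul_conj, Complex.ofReal_re]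
    rw [← h2, h1, Complex.one_re]
  have hsum : ∑ α, c α = k := by
    simp only [hcdef]
    rw [Finset.sum_comm]
    rw [Finset.sum_congr rfl fun j _ => hcol j]
    simp
  -- c α ≤ 1 via projection
  have hc1 : ∀ α, c α ≤ 1 := by
    intro α
    set P : Matrix (Fin n) (Fin n) ℂ := W * Wᴴ with hPdef
    have hPherm : Pᴴ = P := by
      rw [hPdef, Matrix.conjTranspose_mul, Matrix.conjTranspose_conjTranspose]
    have hPP : P * P = P := by
      rw [hPdef, Matrix.mul_assoc, ← Matrix.mul_assoc Wᴴ, hW, Matrix.one_mul]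
    have hPαα : P α α = (c α : ℂ) := by
      rw [hPdef, Matrix.mul_apply, hcdef]
      push_cast
      apply Finset.sum_congr rfl
      intro j _
      rw [Matrix.conjTranspose_apply, Complex.star_def, Complex.mul_conj]
    have hPsq : (P α α).re = ∑ β, Complex.normSq (P α β) := by
      conv_lhs => rw [← hPP]
      rw [Matrix.mul_apply, Complex.re_sum]
      apply Finset.sum_congr rfl
      intro β _
      have : P β α = star (P α β) := by
        conv_lhs => rw [← hPherm]
        rw [Matrix.conjTranspose_apply]
      rw [this, Complex.star_def, Complex.mul_conj, Complex.ofReal_re]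
    have hge : Complex.normSq (P α α) ≤ (P α α).re := by
      rw [hPsq]
      exact Finset.single_le_sum (fun β _ => Complex.normSq_nonneg _) (Finset.mem_univ α)
    rw [hPαα] at hge
    simp only [Complex.normSq_ofReal, Complex.ofReal_re] at hge
    nlinarith [hc0 α]
  -- apply rearrangement
  set σ := Tuple.sort hM.eigenvalues with hσ
  have hmono : Monotone (sortedEigenvalues hM) := Tuple.monotone_sort hM.eigenvalues
  have := kyfan_rearrange hk1 hk2 (sortedEigenvalues hM) (c ∘ σ) hmono
    (fun α => hc0 _) (fun α => hc1 _)
    (by simp only [Function.comp_apply]; rw [Equiv.sum_comp σ c, hsum])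
  calc ∑ j ∈ Finset.univ.filter (fun j : Fin n => (j : ℕ) < k), sortedEigenvalues hM j
      ≤ ∑ α, sortedEigenvalues hM α * (c ∘ σ) α := this
    _ = ∑ α, hM.eigenvalues α * c α := by
        simp only [sortedEigenvalues, Function.comp_apply]
        exact Equiv.sum_comp σ (fun α => hM.eigenvalues α * c α)
    _ = (Matrix.trace (Vᴴ * M * V)).re := htr.symm

open Matrix in
lemma kyfan_exists {n k : ℕ} (hk2 : k ≤ n)
    {M : Matrix (Fin n) (Fin n) ℂ} (hM : M.IsHermitian) :
    ∃ V : Matrix (Fin n) (Fin k) ℂ, Vᴴ * V = 1 ∧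
      (Matrix.trace (Vᴴ * M * V)).re
        = ∑ j ∈ Finset.univ.filter (fun j : Fin n => (j : ℕ) < k), sortedEigenvalues hM j := by
  set U : Matrix (Fin n) (Fin n) ℂ := (hM.eigenvectorUnitary : Matrix (Fin n) (Fin n) ℂ) with hUdef
  have hU1 : Uᴴ * U = 1 := by
    rw [← Matrix.star_eq_conjTranspose]
    exact (Matrix.mem_unitaryGroup_iff').mp (hM.eigenvectorUnitary).2
  set D : Matrix (Fin n) (Fin n) ℂ := Matrix.diagonal (fun i => (hM.eigenvalues i : ℂ)) with hDdef
  have hMspec : M = U * D * Uᴴ := by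
    rw [← Matrix.star_eq_conjTranspose]
    convert hM.spectral_theorem using 3
    rfl
  set σ := Tuple.sort hM.eigenvalues with hσ
  set e : Fin k → Fin n := fun j => σ (Fin.castLE hk2 j) with hedef
  have he : Function.Injective e := σ.injective.comp (Fin.castLE_injective hk2)
  set S : Matrix (Fin n) (Fin k) ℂ := Matrix.of (fun a j => if a = e j then 1 else 0) with hSdef
  have hSS : Sᴴ * S = 1 := by
    ext j j'
    rw [Matrix.mul_apply, Matrix.one_apply]
    simp only [hSdef, Matrix.conjTranspose_apply, Matrix.of_apply]
    have hterm : ∀ a : Fin n, star (if a = e j then (1:ℂ) else 0) * (if a = e j' then 1 else 0)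
        = if a = e j then (if a = e j' then (1:ℂ) else 0) else 0 := by
      intro a
      by_cases h : a = e j <;> simp [h]
    rw [Finset.sum_congr rfl fun a _ => hterm a, Finset.sum_ite_eq' Finset.univ (e j)]
    simp [he.eq_iff]
  have hSDS : ∀ j : Fin k, (Sᴴ * D * S) j j = (hM.eigenvalues (e j) : ℂ) := by
    intro j
    rw [Matrix.mul_assoc, Matrix.mul_apply]
    have : ∀ a : Fin n, (Sᴴ) j a * (D * S) a j
        = if a = e j then (hM.eigenvalues a : ℂ) else 0 := by
      intro a
      rw [Matrix.conjTranspose_apply, hDdef, Matrix.diagonal_mul, hSdef]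
      simp only [Matrix.of_apply]
      by_cases h : a = e j <;> simp [h]
    rw [Finset.sum_congr rfl fun a _ => this a, Finset.sum_ite_eq' Finset.univ (e j)]
    simp
  refine ⟨U * S, ?_, ?_⟩
  · rw [Matrix.conjTranspose_mul, Matrix.mul_assoc, ← Matrix.mul_assoc Uᴴ, hU1,
      Matrix.one_mul, hSS]
  · have hexpand : (U * S)ᴴ * M * (U * S) = Sᴴ * D * S := by
      rw [Matrix.conjTranspose_mul, hMspec]
      calc Sᴴ * Uᴴ * (U * D * Uᴴ) * (U * S)
          = Sᴴ * ((Uᴴ * U) * D * (Uᴴ * U)) * S := by simp only [Matrix.mul_assoc]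
        _ = Sᴴ * D * S := by rw [hU1, Matrix.one_mul, Matrix.mul_one, Matrix.mul_assoc]
    rw [hexpand, Matrix.trace]
    have h1 : ∑ j : Fin k, (Sᴴ * D * S).diag j = ∑ j : Fin k, (hM.eigenvalues (e j) : ℂ) :=
      Finset.sum_congr rfl fun j _ => hSDS j
    rw [h1]
    have h2 : (∑ j : Fin k, (hM.eigenvalues (e j) : ℂ)).re
        = ∑ j : Fin k, sortedEigenvalues hM (Fin.castLE hk2 j) := by
      rw [Complex.re_sum]
      exact Finset.sum_congr rfl fun j _ => Complex.ofReal_re _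
    rw [h2]
    have hfilter : Finset.univ.filter (fun j : Fin n => (j : ℕ) < k)
        = Finset.univ.map (Fin.castLEEmb hk2) := by
      ext a
      simp only [Finset.mem_filter, Finset.mem_univ, true_and, Finset.mem_map,
        Fin.castLEEmb_apply]
      constructor
      · intro h; exact ⟨⟨(a : ℕ), h⟩, by ext; simp⟩
      · rintro ⟨b, rfl⟩; exact b.2
    rw [hfilter, Finset.sum_map]
    rfl

open Matrix

/-- For Hermitian matrices `A`, `B`, the sum of the `k` smallest eigenvalues of `A + B`
is at least the sum of the `k` smallest eigenvalues of `A` plus that of `B`. -/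
theorem sum_smallest_eigenvalues_add_ge {n : ℕ} (hn : 1 ≤ n)
    (A B : Matrix (Fin n) (Fin n) ℂ) (hA : A.IsHermitian) (hB : B.IsHermitian)
    (k : ℕ) (hk1 : 1 ≤ k) (hk2 : k ≤ n) :
    ∑ j ∈ Finset.univ.filter (fun j : Fin n => (j : ℕ) < k),
        sortedEigenvalues (hA.add hB) j ≥
      ∑ j ∈ Finset.univ.filter (fun j : Fin n => (j : ℕ) < k),
        (sortedEigenvalues hA j + sortedEigenvalues hB j) := by
  obtain ⟨V, hV, heq⟩ := kyfan_exists hk2 (hA.add hB)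
  have hsplit : Vᴴ * (A + B) * V = Vᴴ * A * V + Vᴴ * B * V := by
    rw [Matrix.mul_add, Matrix.add_mul]
  have h1 := kyfan_lower hk1 hk2 hA V hV
  have h2 := kyfan_lower hk1 hk2 hB V hV
  rw [ge_iff_le, Finset.sum_add_distrib, ← heq, hsplit, Matrix.trace_add, Complex.add_re]
  exact add_le_add h1 h2
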